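/- arXiv:2602.16838 — 2 statements merged into one kernel-verified Lean document; each statement's English description precedes it below -/
import Mathlib

section
/- Let p > 0, let r ≥ 2, let (Ω_i, 𝓕_i, P_i), 1 ≤ i ≤ r, be probability spaces, let X_i : Ω_i → [0,∞) be measurable, let f_i : Ω_i → [0,∞) be measurable for 1 ≤ i ≤ r−1, and let g : Ω_r × [0,∞) → [0,∞) be measurable. Write S(ω) = ∑_{i=1}^{r−1} X_i(ω_i) for ω = (ω_1, …, ω_r). Then, with μ_p the exponential distribution with rate p, ∫ 1_{{S(ω) < ℓ ≤ S(ω) + X_r(ω_r)}} ∏_{i=1}^{r−1} f_i(ω_i) · g(ω_r, ℓ − S(ω)) d(P_1 ⊗ ⋯ ⊗ P_r ⊗ μ_p)(ω, ℓ) = ∏_{i=1}^{r−1} [∫ f_i(ω_i) 1_{{X_i(ω_i) < ℓ_i}} d(P_i ⊗ μ_p)(ω_i, ℓ_i)] · ∫ g(ω_r, ℓ_r) 1_{{ℓ_r ≤ X_r(ω_r)}} d(P_r ⊗ μ_p)(ω_r, ℓ_r). -/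
open MeasureTheory ProbabilityTheory NNReal ENNReal

section RebirthAux

open Real Set

lemma measurable_exponentialPDF' (p : ℝ) : Measurable (exponentialPDF p) := by
  exact (measurable_exponentialPDFReal p).ennreal_ofReal

lemma expMeasure_eq_withDensity (p : ℝ) :
    expMeasure p = MeasureTheory.volume.withDensity (exponentialPDF p) := rfl

lemma expMeasure_Iic' (p : ℝ) (hp : 0 < p) (x : ℝ) :
    expMeasure p (Iic x) = ENNReal.ofReal (if 0 ≤ x then 1 - exp (-(p * x)) else 0) := by
  rw [expMeasure_eq_withDensity, withDensity_apply _ measurableSet_Iic,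
    lintegral_exponentialPDF_eq_antiDeriv hp]

lemma expMeasure_ae_pos (p : ℝ) (hp : 0 < p) : ∀ᵐ x ∂expMeasure p, 0 < x := by
  rw [ae_iff]
  have h : {x : ℝ | ¬ 0 < x} = Iic 0 := by ext x; simp
  rw [h, expMeasure_Iic' p hp]
  simp

lemma expMeasure_Ioi' (p : ℝ) (hp : 0 < p) {a : ℝ} (ha : 0 ≤ a) :
    expMeasure p (Ioi a) = ENNReal.ofReal (exp (-(p * a))) := by
  haveI : IsProbabilityMeasure (expMeasure p) := isProbabilityMeasure_expMeasure hp
  have h1 : Ioi a = (Iic a)ᶜ := by ext x; simp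
  have hle : exp (-(p * a)) ≤ 1 := by
    rw [exp_le_one_iff]
    nlinarith
  rw [h1, measure_compl measurableSet_Iic (measure_ne_top _ _), measure_univ,
    expMeasure_Iic' p hp, if_pos ha, ← ENNReal.ofReal_one,
    ← ENNReal.ofReal_sub _ (by linarith [exp_nonneg (-(p * a))])]
  norm_num

/-- Memorylessness of the exponential distribution, in lintegral form. -/
lemma lintegral_expMeasure_shift (p : ℝ) (hp : 0 < p) {s : ℝ} (hs : 0 ≤ s)
    (G : ℝ → ℝ≥0∞) (hG : Measurable G) :
    ∫⁻ ℓ, (if s < ℓ then G (ℓ - s) else 0) ∂expMeasure p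
      = ENNReal.ofReal (exp (-(p * s))) * ∫⁻ t, (if 0 < t then G t else 0) ∂expMeasure p := by
  have hmeas : Measurable fun ℓ : ℝ => (if s < ℓ then G (ℓ - s) else 0 : ℝ≥0∞) :=
    Measurable.ite (measurableSet_lt measurable_const measurable_id)
      (hG.comp (measurable_id.sub measurable_const)) measurable_const
  have hmeas2 : Measurable fun t : ℝ => (if 0 < t then G t else 0 : ℝ≥0∞) :=
    Measurable.ite (measurableSet_lt measurable_const measurable_id) hG measurable_const
  rw [expMeasure_eq_withDensity,
    lintegral_withDensity_eq_lintegral_mul _ (measurable_exponentialPDF' p) hmeas,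
    lintegral_withDensity_eq_lintegral_mul _ (measurable_exponentialPDF' p) hmeas2]
  try simp only [Pi.mul_apply]
  rw [← lintegral_add_right_eq_self
      (fun ℓ => exponentialPDF p ℓ * (if s < ℓ then G (ℓ - s) else 0)) s,
    ← lintegral_const_mul _ (f := fun a => exponentialPDF p a * if 0 < a then G a else 0)
      ((measurable_exponentialPDF' p).mul hmeas2)]
  apply lintegral_congr
  intro t
  try simp only []
  by_cases ht : 0 < t
  · rw [if_pos (by linarith : s < t + s), if_pos ht, add_sub_cancel_right,
      exponentialPDF_of_nonneg (by linarith : (0:ℝ) ≤ t + s),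
      exponentialPDF_of_nonneg ht.le, ← mul_assoc,
      ← ENNReal.ofReal_mul (exp_nonneg _)]
    congr 2
    have h : -(p * (t + s)) = -(p * s) + -(p * t) := by ring
    rw [h, exp_add]
    ring
  · rw [if_neg (by intro h; exact ht (by linarith)), if_neg ht, mul_zero, mul_zero, mul_zero]

universe u

/-- Tonelli for a product of single-coordinate functions over a finite product measure. -/
lemma lintegral_fin_pi_prod {n : ℕ} {E : Fin n → Type u} [∀ i, MeasurableSpace (E i)]
    (μ : ∀ i, Measure (E i)) [∀ i, SigmaFinite (μ i)]
    (f : ∀ i, E i → ℝ≥0∞) (hf : ∀ i, Measurable (f i)) :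
    ∫⁻ x, ∏ i, f i (x i) ∂Measure.pi μ = ∏ i, ∫⁻ x, f i x ∂μ i := by
  induction n with
  | zero =>
      simp only [Finset.univ_eq_empty, Finset.prod_empty, lintegral_const, one_mul,
        Measure.pi_univ]
  | succ n ih =>
      have hmp := (measurePreserving_piFinSuccAbove μ 0).symm
      rw [← hmp.lintegral_comp_emb (MeasurableEquiv.measurableEmbedding _)
        (fun x => ∏ i, f i (x i))]
      simp_rw [MeasurableEquiv.piFinSuccAbove_symm_apply, Fin.insertNthEquiv,
        Equiv.coe_fn_mk, Fin.insertNth_zero, Fin.prod_univ_succ, Fin.zero_succAbove,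
        Fin.cons_zero, Fin.cons_succ]
      have hprod : Measurable fun x : ∀ i : Fin n, E i.succ => ∏ i, f i.succ (x i) :=
        Finset.measurable_prod _ fun i _ => (hf i.succ).comp (measurable_pi_apply i)
      have := lintegral_prod_mul (μ := μ 0) (ν := Measure.pi fun j => μ j.succ)
        (hf 0).aemeasurable hprod.aemeasurable
      rw [ih (fun i => μ i.succ) (fun i => f i.succ) (fun i => hf i.succ)] at this
      exact this

end RebirthAux

/-- The Fubini-type computational core of Lemma 4.2 of the paper.  With `r ≥ 2`
probability spaces (here the first `r-1` are indexed by `Fin (r-1)` and the `r`-th one is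
`Ωr`), nonnegative measurable `X_i`, nonnegative measurable `f_i` (`1 ≤ i ≤ r-1`) and
`g` on `Ω_r × [0,∞)`, `S(ω) = ∑_{i=1}^{r-1} X_i(ω_i)`, and `μ_p` the exponential
distribution of rate `p > 0`:
`∫ 1_{S(ω) < ℓ ≤ S(ω)+X_r(ω_r)} ∏ f_i(ω_i) · g(ω_r, ℓ - S(ω)) d(P_1 ⊗ ⋯ ⊗ P_r ⊗ μ_p)
  = ∏_i ∫ f_i(ω_i) 1_{X_i(ω_i) < ℓ_i} d(P_i ⊗ μ_p) · ∫ g(ω_r, ℓ_r) 1_{ℓ_r ≤ X_r(ω_r)} d(P_r ⊗ μ_p)`. -/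
theorem lintegral_rebirth_exponential_factorization
    (p : ℝ) (hp : 0 < p)
    (r : ℕ) (hr : 2 ≤ r)
    (Ω : Fin (r - 1) → Type*) [∀ i, MeasurableSpace (Ω i)]
    (P : ∀ i, Measure (Ω i)) [∀ i, IsProbabilityMeasure (P i)]
    (Ωr : Type*) [MeasurableSpace Ωr]
    (Pr : Measure Ωr) [IsProbabilityMeasure Pr]
    (X : ∀ i, Ω i → ℝ) (hX : ∀ i, Measurable (X i)) (hX_nonneg : ∀ i ω, 0 ≤ X i ω)
    (Xr : Ωr → ℝ) (hXr : Measurable Xr) (hXr_nonneg : ∀ ω, 0 ≤ Xr ω)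
    (f : ∀ i, Ω i → ℝ≥0) (hf : ∀ i, Measurable (f i))
    (g : Ωr → ℝ → ℝ≥0) (hg : Measurable fun y : Ωr × ℝ => g y.1 y.2) :
    ∫⁻ (z : (∀ i, Ω i) × (Ωr × ℝ)) in
        {z | (∑ i, X i (z.1 i)) < z.2.2 ∧ z.2.2 ≤ (∑ i, X i (z.1 i)) + Xr z.2.1},
        ((∏ i, (f i (z.1 i) : ℝ≥0∞)) * (g z.2.1 (z.2.2 - ∑ i, X i (z.1 i)) : ℝ≥0∞))
        ∂((Measure.pi P).prod (Pr.prod (expMeasure p)))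
      = (∏ i, ∫⁻ (y : Ω i × ℝ) in {y | X i y.1 < y.2}, (f i y.1 : ℝ≥0∞)
            ∂((P i).prod (expMeasure p)))
        * ∫⁻ (y : Ωr × ℝ) in {y | y.2 ≤ Xr y.1}, (g y.1 y.2 : ℝ≥0∞)
            ∂(Pr.prod (expMeasure p)) := by
  classical
  haveI : IsProbabilityMeasure (expMeasure p) := isProbabilityMeasure_expMeasure hp
  set ν := expMeasure p with hν
  -- basic measurability
  have hS : Measurable (fun ω : ∀ i, Ω i => ∑ i, X i (ω i)) :=
    Finset.measurable_sum _ fun i _ => (hX i).comp (measurable_pi_apply i)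
  have hS0 : ∀ ω : ∀ i, Ω i, 0 ≤ ∑ i, X i (ω i) :=
    fun ω => Finset.sum_nonneg fun i _ => hX_nonneg i (ω i)
  have hF : Measurable fun ω : ∀ i, Ω i => ∏ i, (f i (ω i) : ℝ≥0∞) :=
    Finset.measurable_prod _ fun i _ =>
      measurable_coe_nnreal_ennreal.comp ((hf i).comp (measurable_pi_apply i))
  -- the g kernel K
  set K : Ωr → ℝ≥0∞ :=
    fun x => ∫⁻ t, (if 0 < t ∧ t ≤ Xr x then (g x t : ℝ≥0∞) else 0) ∂ν with hKdef
  have hgK : Measurable fun y : Ωr × ℝ =>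
      (if 0 < y.2 ∧ y.2 ≤ Xr y.1 then (g y.1 y.2 : ℝ≥0∞) else 0) := by
    have hs : MeasurableSet {y : Ωr × ℝ | 0 < y.2 ∧ y.2 ≤ Xr y.1} :=
      (measurableSet_lt measurable_const measurable_snd).inter
        (measurableSet_le measurable_snd (hXr.comp measurable_fst))
    exact Measurable.ite hs (measurable_coe_nnreal_ennreal.comp hg) measurable_const
  have hKmeas : Measurable K := hgK.lintegral_prod_right'
  -- set measurability for the LHS
  have hsetL : MeasurableSet {z : (∀ i, Ω i) × (Ωr × ℝ) |
      (∑ i, X i (z.1 i)) < z.2.2 ∧ z.2.2 ≤ (∑ i, X i (z.1 i)) + Xr z.2.1} :=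
    (measurableSet_lt (hS.comp measurable_fst) (measurable_snd.comp measurable_snd)).inter
      (measurableSet_le (measurable_snd.comp measurable_snd)
        ((hS.comp measurable_fst).add (hXr.comp (measurable_fst.comp measurable_snd))))
  -- measurability of the full integrand in if-form
  have hgz : Measurable fun z : (∀ i, Ω i) × (Ωr × ℝ) =>
      (g z.2.1 (z.2.2 - ∑ i, X i (z.1 i)) : ℝ≥0∞) :=
    measurable_coe_nnreal_ennreal.comp (hg.comp
      ((measurable_fst.comp measurable_snd).prodMk
        ((measurable_snd.comp measurable_snd).sub (hS.comp measurable_fst))))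
  have hΦ : Measurable fun z : (∀ i, Ω i) × (Ωr × ℝ) =>
      (∏ i, (f i (z.1 i) : ℝ≥0∞)) *
        (if (∑ i, X i (z.1 i)) < z.2.2 ∧ z.2.2 ≤ (∑ i, X i (z.1 i)) + Xr z.2.1
          then (g z.2.1 (z.2.2 - ∑ i, X i (z.1 i)) : ℝ≥0∞) else 0) :=
    (hF.comp measurable_fst).mul (Measurable.ite hsetL hgz measurable_const)
  -- Step 1: write the LHS with indicators as an if-form lintegral
  rw [← lintegral_indicator hsetL]
  have hind : (Set.indicator {z : (∀ i, Ω i) × (Ωr × ℝ) |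
        (∑ i, X i (z.1 i)) < z.2.2 ∧ z.2.2 ≤ (∑ i, X i (z.1 i)) + Xr z.2.1}
        fun z => (∏ i, (f i (z.1 i) : ℝ≥0∞)) * (g z.2.1 (z.2.2 - ∑ i, X i (z.1 i)) : ℝ≥0∞))
      = fun z : (∀ i, Ω i) × (Ωr × ℝ) =>
          (∏ i, (f i (z.1 i) : ℝ≥0∞)) *
            (if (∑ i, X i (z.1 i)) < z.2.2 ∧ z.2.2 ≤ (∑ i, X i (z.1 i)) + Xr z.2.1
              then (g z.2.1 (z.2.2 - ∑ i, X i (z.1 i)) : ℝ≥0∞) else 0) := by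
    funext z
    simp only [Set.indicator_apply, Set.mem_setOf_eq]
    split_ifs <;> simp
  rw [hind]
  -- Step 2: Tonelli
  rw [lintegral_prod _ hΦ.aemeasurable]
  try simp only []
  -- Step 3: inner integral over (Ωr × ℝ)
  have key : ∀ (x : Ωr) {s : ℝ}, 0 ≤ s →
      ∫⁻ ℓ, (if s < ℓ ∧ ℓ ≤ s + Xr x then (g x (ℓ - s) : ℝ≥0∞) else 0) ∂ν
        = ENNReal.ofReal (Real.exp (-(p * s))) * K x := by
    intro x s hs
    have hGx : Measurable fun t : ℝ => (if t ≤ Xr x then (g x t : ℝ≥0∞) else 0) :=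
      Measurable.ite (measurableSet_le measurable_id measurable_const)
        (measurable_coe_nnreal_ennreal.comp (hg.comp (measurable_const.prodMk measurable_id)))
        measurable_const
    have h1 : (fun ℓ : ℝ => (if s < ℓ ∧ ℓ ≤ s + Xr x then (g x (ℓ - s) : ℝ≥0∞) else 0))
        = fun ℓ : ℝ => (if s < ℓ then
            (fun t : ℝ => if t ≤ Xr x then (g x t : ℝ≥0∞) else 0) (ℓ - s) else 0) := by
      funext ℓ
      by_cases h : s < ℓ
      · by_cases h2 : ℓ - s ≤ Xr x
        · rw [if_pos ⟨h, by linarith⟩]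
          simp only [if_pos h, if_pos h2]
        · rw [if_neg (by rintro ⟨-, hc⟩; exact h2 (by linarith))]
          simp only [if_pos h, if_neg h2]
      · rw [if_neg (by rintro ⟨hc, -⟩; exact h hc), if_neg h]
    rw [h1, lintegral_expMeasure_shift p hp hs _ hGx]
    congr 1
    apply lintegral_congr
    intro t
    by_cases h0 : 0 < t <;> by_cases h2 : t ≤ Xr x <;> simp [h0, h2]
  have inner : ∀ ω : ∀ i, Ω i,
      ∫⁻ y : Ωr × ℝ, (∏ i, (f i (ω i) : ℝ≥0∞)) *
          (if (∑ i, X i (ω i)) < y.2 ∧ y.2 ≤ (∑ i, X i (ω i)) + Xr y.1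
            then (g y.1 (y.2 - ∑ i, X i (ω i)) : ℝ≥0∞) else 0) ∂(Pr.prod ν)
        = ((∏ i, (f i (ω i) : ℝ≥0∞)) *
            ENNReal.ofReal (Real.exp (-(p * ∑ i, X i (ω i))))) * ∫⁻ x, K x ∂Pr := by
    intro ω
    have hmeasy : Measurable fun y : Ωr × ℝ =>
        (if (∑ i, X i (ω i)) < y.2 ∧ y.2 ≤ (∑ i, X i (ω i)) + Xr y.1
          then (g y.1 (y.2 - ∑ i, X i (ω i)) : ℝ≥0∞) else 0) := by
      have hs : MeasurableSet {y : Ωr × ℝ |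
          (∑ i, X i (ω i)) < y.2 ∧ y.2 ≤ (∑ i, X i (ω i)) + Xr y.1} :=
        (measurableSet_lt measurable_const measurable_snd).inter
          (measurableSet_le measurable_snd ((hXr.comp measurable_fst).const_add _))
      exact Measurable.ite hs
        (measurable_coe_nnreal_ennreal.comp
          (hg.comp (measurable_fst.prodMk (measurable_snd.sub measurable_const))))
        measurable_const
    rw [lintegral_const_mul _ hmeasy, lintegral_prod _ hmeasy.aemeasurable]
    try simp only []
    have hx : ∀ x : Ωr, ∫⁻ ℓ, (if (∑ i, X i (ω i)) < ℓ ∧ ℓ ≤ (∑ i, X i (ω i)) + Xr x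
        then (g x (ℓ - ∑ i, X i (ω i)) : ℝ≥0∞) else 0) ∂ν
        = ENNReal.ofReal (Real.exp (-(p * ∑ i, X i (ω i)))) * K x := fun x => key x (hS0 ω)
    rw [lintegral_congr hx, lintegral_const_mul _ hKmeas, ← mul_assoc]
  rw [lintegral_congr inner,
    lintegral_mul_const _ (f := fun ω : ∀ i, Ω i => (∏ i, (f i (ω i) : ℝ≥0∞)) *
        ENNReal.ofReal (Real.exp (-(p * ∑ i, X i (ω i)))))
      (hF.mul (((hS.const_mul p).neg.exp).ennreal_ofReal))]
  -- Step 4: factor the ω-integral into a product over i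
  have prod_exp : (fun ω : ∀ i, Ω i => (∏ i, (f i (ω i) : ℝ≥0∞)) *
        ENNReal.ofReal (Real.exp (-(p * ∑ i, X i (ω i)))))
      = fun ω : ∀ i, Ω i =>
          ∏ i, ((f i (ω i) : ℝ≥0∞) * ENNReal.ofReal (Real.exp (-(p * X i (ω i))))) := by
    funext ω
    rw [Finset.prod_mul_distrib]
    congr 1
    rw [← ENNReal.ofReal_prod_of_nonneg (fun i _ => Real.exp_nonneg _), ← Real.exp_sum]
    congr 2
    rw [Finset.mul_sum, Finset.sum_neg_distrib]
  rw [prod_exp, lintegral_fin_pi_prod P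
    (fun i x => (f i x : ℝ≥0∞) * ENNReal.ofReal (Real.exp (-(p * X i x))))
    (fun i => (measurable_coe_nnreal_ennreal.comp (hf i)).mul
      ((((hX i).const_mul p).neg.exp).ennreal_ofReal))]
  -- Step 5: identify the factors with the RHS
  have factor_i : ∀ i, ∫⁻ (y : Ω i × ℝ) in {y | X i y.1 < y.2}, (f i y.1 : ℝ≥0∞)
      ∂((P i).prod ν)
      = ∫⁻ x, (f i x : ℝ≥0∞) * ENNReal.ofReal (Real.exp (-(p * X i x))) ∂P i := by
    intro i
    have hset : MeasurableSet {y : Ω i × ℝ | X i y.1 < y.2} :=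
      measurableSet_lt ((hX i).comp measurable_fst) measurable_snd
    have hmeasi : Measurable fun y : Ω i × ℝ => (if X i y.1 < y.2 then (f i y.1 : ℝ≥0∞) else 0) :=
      Measurable.ite hset
        (measurable_coe_nnreal_ennreal.comp ((hf i).comp measurable_fst)) measurable_const
    rw [← lintegral_indicator hset]
    have hi : (Set.indicator {y : Ω i × ℝ | X i y.1 < y.2} fun y => (f i y.1 : ℝ≥0∞))
        = fun y : Ω i × ℝ => if X i y.1 < y.2 then (f i y.1 : ℝ≥0∞) else 0 := by
      funext y
      simp [Set.indicator_apply, Set.mem_setOf_eq]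
    rw [hi, lintegral_prod _ hmeasi.aemeasurable]
    try simp only []
    apply lintegral_congr
    intro x
    have hii : (fun ℓ : ℝ => if X i x < ℓ then (f i x : ℝ≥0∞) else 0)
        = (Set.Ioi (X i x)).indicator fun _ => (f i x : ℝ≥0∞) := by
      funext ℓ
      simp [Set.indicator_apply, Set.mem_Ioi]
    rw [hii, lintegral_indicator measurableSet_Ioi, setLIntegral_const,
      expMeasure_Ioi' p hp (hX_nonneg i x)]
  have factor_r : ∫⁻ (y : Ωr × ℝ) in {y | y.2 ≤ Xr y.1}, (g y.1 y.2 : ℝ≥0∞) ∂(Pr.prod ν)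
      = ∫⁻ x, K x ∂Pr := by
    have hset2 : MeasurableSet {y : Ωr × ℝ | y.2 ≤ Xr y.1} :=
      measurableSet_le measurable_snd (hXr.comp measurable_fst)
    have hmeas2' : Measurable fun y : Ωr × ℝ => (if y.2 ≤ Xr y.1 then (g y.1 y.2 : ℝ≥0∞) else 0) :=
      Measurable.ite hset2 (measurable_coe_nnreal_ennreal.comp hg) measurable_const
    rw [← lintegral_indicator hset2]
    have hi : (Set.indicator {y : Ωr × ℝ | y.2 ≤ Xr y.1} fun y => (g y.1 y.2 : ℝ≥0∞))
        = fun y : Ωr × ℝ => if y.2 ≤ Xr y.1 then (g y.1 y.2 : ℝ≥0∞) else 0 := by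
      funext y
      simp [Set.indicator_apply, Set.mem_setOf_eq]
    rw [hi, lintegral_prod _ hmeas2'.aemeasurable]
    try simp only []
    apply lintegral_congr
    intro x
    apply lintegral_congr_ae
    filter_upwards [expMeasure_ae_pos p hp] with ℓ hℓ
    simp [hℓ]
  rw [factor_r]
  congr 1
  exact Finset.prod_congr rfl fun i _ => (factor_i i).symm
end

section
/- Let p > 0, let r ≥ 2, let (Ω_i, 𝓕_i, P_i), 1 ≤ i ≤ r, be probability spaces, let X_i : Ω_i → [0,∞) be measurable with P_r(X_r > 0) > 0, let E be a measurable space, let G : Ω_r × [0,∞) → E be measurable, and let B ⊆ E be measurable. Write S(ω) = ∑_{i=1}^{r−1} X_i(ω_i) and let Q = P_1 ⊗ ⋯ ⊗ P_r ⊗ μ_p on Ω_1 × ⋯ × Ω_r × [0,∞), with coordinate ℓ on the last factor. Then Q(G(ω_r, ℓ − S(ω)) ∈ B │ S(ω) < ℓ ≤ S(ω) + X_r(ω_r)) = (P_r ⊗ μ_p)(G(ω_r, ℓ_r) ∈ B │ ℓ_r ≤ X_r(ω_r)). -/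
open MeasureTheory ProbabilityTheory NNReal ENNReal Set Real

lemma expMeasure_apply' (p : ℝ) {A : Set ℝ} (hA : MeasurableSet A) :
    expMeasure p A = ∫⁻ x in A, exponentialPDF p x := by
  rw [expMeasure, gammaMeasure, withDensity_apply _ hA]
  rfl

lemma expMeasure_Iic_zero (p : ℝ) : expMeasure p (Iic (0:ℝ)) = 0 := by
  have h1 : expMeasure p (Iio (0:ℝ)) = 0 := by
    rw [expMeasure_apply' p measurableSet_Iio]
    exact lintegral_exponentialPDF_of_nonpos le_rfl
  have h2 : expMeasure p {(0:ℝ)} = 0 := by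
    rw [expMeasure_apply' p (measurableSet_singleton 0)]
    exact setLIntegral_measure_zero _ _ (measure_singleton 0)
  rw [← Iio_union_right]
  exact measure_union_null h1 h2

lemma exp_shift (p : ℝ) (hp : 0 < p) (s : ℝ) (hs : 0 ≤ s) (T : Set ℝ) (hT : MeasurableSet T) :
    expMeasure p {ℓ : ℝ | s < ℓ ∧ ℓ - s ∈ T} =
      ENNReal.ofReal (Real.exp (-(p * s))) * expMeasure p ({t : ℝ | 0 < t} ∩ T) := by
  have hST : MeasurableSet ({t : ℝ | 0 < t} ∩ T) := measurableSet_Ioi.inter hT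
  have hpre : (fun t : ℝ => t + s) ⁻¹' {ℓ : ℝ | s < ℓ ∧ ℓ - s ∈ T} = {t : ℝ | 0 < t} ∩ T := by
    ext t
    simp only [mem_preimage, mem_setOf_eq, mem_inter_iff, add_sub_cancel_right]
    constructor
    · rintro ⟨h1, h2⟩; exact ⟨by linarith, h2⟩
    · rintro ⟨h1, h2⟩; exact ⟨by linarith, h2⟩
  have hA : MeasurableSet {ℓ : ℝ | s < ℓ ∧ ℓ - s ∈ T} := by
    have heq : {ℓ : ℝ | s < ℓ ∧ ℓ - s ∈ T} =
        Ioi s ∩ ((fun ℓ : ℝ => ℓ - s) ⁻¹' T) := rfl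
    rw [heq]
    exact measurableSet_Ioi.inter ((measurable_id.sub_const s) hT)
  have hpdf : Measurable (exponentialPDF p) :=
    (measurable_exponentialPDFReal p).ennreal_ofReal
  rw [expMeasure_apply' p hA, expMeasure_apply' p hST]
  have hmp : MeasurePreserving (fun t : ℝ => t + s) volume volume :=
    measurePreserving_add_right volume s
  rw [← hmp.setLIntegral_comp_preimage hA hpdf, hpre]
  rw [← lintegral_const_mul' _ _ ENNReal.ofReal_ne_top]
  refine setLIntegral_congr_fun hST ?_
  intro t htm
  dsimp only
  have ht0 : 0 < t := htm.1
  rw [exponentialPDF_of_nonneg (by linarith : (0:ℝ) ≤ t + s),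
    exponentialPDF_of_nonneg ht0.le, ← ENNReal.ofReal_mul (Real.exp_nonneg _)]
  rw [show -(p*(t+s)) = -(p*s) + -(p*t) by ring, Real.exp_add]
  ring

/-- The marginal statement (n3.26) of Lemma 4.2 of the paper.  With `r ≥ 2` probability
spaces (the first `r-1` indexed by `Fin (r-1)`, the `r`-th being `Ωr`), nonnegative
measurable `X_i` with `P_r(X_r > 0) > 0`, measurable `G : Ω_r × [0,∞) → E`, measurable
`B ⊆ E`, `S(ω) = ∑_{i=1}^{r-1} X_i(ω_i)`, `μ_p` the exponential distribution of rate
`p > 0`, and `Q = P_1 ⊗ ⋯ ⊗ P_r ⊗ μ_p`: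
`Q(G(ω_r, ℓ - S(ω)) ∈ B │ S(ω) < ℓ ≤ S(ω) + X_r(ω_r))
  = (P_r ⊗ μ_p)(G(ω_r, ℓ_r) ∈ B │ ℓ_r ≤ X_r(ω_r))`. -/
theorem cond_rebirth_exponential_marginal
    (p : ℝ) (hp : 0 < p)
    (r : ℕ) (hr : 2 ≤ r)
    (Ω : Fin (r - 1) → Type*) [∀ i, MeasurableSpace (Ω i)]
    (P : ∀ i, Measure (Ω i)) [∀ i, IsProbabilityMeasure (P i)]
    (Ωr : Type*) [MeasurableSpace Ωr]
    (Pr : Measure Ωr) [IsProbabilityMeasure Pr]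
    (X : ∀ i, Ω i → ℝ) (hX : ∀ i, Measurable (X i)) (hX_nonneg : ∀ i ω, 0 ≤ X i ω)
    (Xr : Ωr → ℝ) (hXr : Measurable Xr) (hXr_nonneg : ∀ ω, 0 ≤ Xr ω)
    (hXr_pos : 0 < Pr {ω | 0 < Xr ω})
    (E : Type*) [MeasurableSpace E]
    (G : Ωr → ℝ → E) (hG : Measurable fun y : Ωr × ℝ => G y.1 y.2)
    (B : Set E) (hB : MeasurableSet B) :
    ((Measure.pi P).prod (Pr.prod (expMeasure p)))[|
        {z : (∀ i, Ω i) × (Ωr × ℝ) |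
          (∑ i, X i (z.1 i)) < z.2.2 ∧ z.2.2 ≤ (∑ i, X i (z.1 i)) + Xr z.2.1}]
      {z : (∀ i, Ω i) × (Ωr × ℝ) | G z.2.1 (z.2.2 - ∑ i, X i (z.1 i)) ∈ B}
    = (Pr.prod (expMeasure p))[|{y : Ωr × ℝ | y.2 ≤ Xr y.1}]
        {y : Ωr × ℝ | G y.1 y.2 ∈ B} := by
  haveI : IsProbabilityMeasure (expMeasure p) := isProbabilityMeasure_expMeasure hp
  set S : (∀ i, Ω i) → ℝ := fun ω => ∑ i, X i (ω i) with hS_def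
  have hS_meas : Measurable S :=
    Finset.measurable_sum _ (fun i _ => (hX i).comp (measurable_pi_apply i))
  have hS_nonneg : ∀ ω, 0 ≤ S ω := fun ω => Finset.sum_nonneg fun i _ => hX_nonneg i _
  set ν : Measure (Ωr × ℝ) := Pr.prod (expMeasure p) with hν_def
  set c : ℝ≥0∞ := ∫⁻ ω, ENNReal.ofReal (Real.exp (-(p * S ω))) ∂(Measure.pi P) with hc_def
  have hf_meas : Measurable fun ω => ENNReal.ofReal (Real.exp (-(p * S ω))) :=
    (Real.measurable_exp.comp (hS_meas.const_mul p).neg).ennreal_ofReal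
  have hc_le_one : c ≤ 1 := by
    calc c ≤ ∫⁻ _, 1 ∂(Measure.pi P) := by
          refine lintegral_mono fun ω => ?_
          rw [← ENNReal.ofReal_one]
          exact ENNReal.ofReal_le_ofReal
            (Real.exp_le_one_iff.2 (by nlinarith [hS_nonneg ω]))
      _ = 1 := by simp
  have hc_ne_top : c ≠ ∞ := (lt_of_le_of_lt hc_le_one ENNReal.one_lt_top).ne
  have hc_ne_zero : c ≠ 0 := by
    intro h0
    rw [hc_def, lintegral_eq_zero_iff hf_meas] at h0
    have h1 : (Measure.pi P) {ω | ¬ (ENNReal.ofReal (Real.exp (-(p * S ω))) = 0)} = 0 :=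
      ae_iff.1 h0
    have huniv : {ω : ∀ i, Ω i | ¬ (ENNReal.ofReal (Real.exp (-(p * S ω))) = 0)} = univ := by
      ext ω
      simp only [mem_setOf_eq, mem_univ, iff_true]
      exact (ENNReal.ofReal_pos.2 (Real.exp_pos _)).ne'
    rw [huniv, measure_univ] at h1
    exact one_ne_zero h1
  have hν0 : ν {y : Ωr × ℝ | y.2 ≤ 0} = 0 := by
    have heq : {y : Ωr × ℝ | y.2 ≤ 0} = (univ : Set Ωr) ×ˢ Iic (0:ℝ) := by
      ext y; simp [Set.mem_prod]
    rw [heq, hν_def, Measure.prod_prod, expMeasure_Iic_zero, mul_zero]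
  have hnull : ∀ V : Set (Ωr × ℝ), ν ({y : Ωr × ℝ | 0 < y.2} ∩ V) = ν V := by
    intro V
    refine le_antisymm (measure_mono inter_subset_right) ?_
    calc ν V ≤ ν (({y : Ωr × ℝ | 0 < y.2} ∩ V) ∪ {y : Ωr × ℝ | y.2 ≤ 0}) := by
          refine measure_mono fun y hy => ?_
          by_cases h : 0 < y.2
          · exact Or.inl ⟨h, hy⟩
          · exact Or.inr (le_of_not_gt h)
      _ ≤ ν ({y : Ωr × ℝ | 0 < y.2} ∩ V) + ν {y : Ωr × ℝ | y.2 ≤ 0} := measure_union_le _ _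
      _ = ν ({y : Ωr × ℝ | 0 < y.2} ∩ V) := by rw [hν0, add_zero]
  -- the key computation
  have key : ∀ V : Set (Ωr × ℝ), MeasurableSet V →
      ((Measure.pi P).prod ν)
        {z : (∀ i, Ω i) × (Ωr × ℝ) | S z.1 < z.2.2 ∧ (z.2.1, z.2.2 - S z.1) ∈ V}
      = c * ν V := by
    intro V hV
    have hmap : Measurable fun z : (∀ i, Ω i) × (Ωr × ℝ) => (z.2.1, z.2.2 - S z.1) :=
      (measurable_snd.fst).prodMk (measurable_snd.snd.sub (hS_meas.comp measurable_fst))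
    have hset : MeasurableSet
        {z : (∀ i, Ω i) × (Ωr × ℝ) | S z.1 < z.2.2 ∧ (z.2.1, z.2.2 - S z.1) ∈ V} := by
      have heq : {z : (∀ i, Ω i) × (Ωr × ℝ) | S z.1 < z.2.2 ∧ (z.2.1, z.2.2 - S z.1) ∈ V}
          = {z : (∀ i, Ω i) × (Ωr × ℝ) | S z.1 < z.2.2} ∩
            ((fun z : (∀ i, Ω i) × (Ωr × ℝ) => (z.2.1, z.2.2 - S z.1)) ⁻¹' V) := rfl
      rw [heq]
      exact (measurableSet_lt (hS_meas.comp measurable_fst) measurable_snd.snd).inter (hmap hV)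
    have hset3 : MeasurableSet ({y : Ωr × ℝ | 0 < y.2} ∩ V) :=
      (measurableSet_lt measurable_const measurable_snd).inter hV
    rw [Measure.prod_apply hset]
    have slice : ∀ ω : ∀ i, Ω i,
        ν (Prod.mk ω ⁻¹'
          {z : (∀ i, Ω i) × (Ωr × ℝ) | S z.1 < z.2.2 ∧ (z.2.1, z.2.2 - S z.1) ∈ V})
        = ENNReal.ofReal (Real.exp (-(p * S ω))) * ν ({y : Ωr × ℝ | 0 < y.2} ∩ V) := by
      intro ω
      have hsl : Prod.mk ω ⁻¹'
            {z : (∀ i, Ω i) × (Ωr × ℝ) | S z.1 < z.2.2 ∧ (z.2.1, z.2.2 - S z.1) ∈ V}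
          = {y : Ωr × ℝ | S ω < y.2 ∧ (y.1, y.2 - S ω) ∈ V} := rfl
      have hset2 : MeasurableSet {y : Ωr × ℝ | S ω < y.2 ∧ (y.1, y.2 - S ω) ∈ V} := by
        have heq : {y : Ωr × ℝ | S ω < y.2 ∧ (y.1, y.2 - S ω) ∈ V}
            = {y : Ωr × ℝ | S ω < y.2} ∩
              ((fun y : Ωr × ℝ => (y.1, y.2 - S ω)) ⁻¹' V) := rfl
        rw [heq]
        exact (measurableSet_lt measurable_const measurable_snd).inter
          ((measurable_fst.prodMk (measurable_snd.sub_const (S ω))) hV)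
      rw [hsl, hν_def, Measure.prod_apply hset2, Measure.prod_apply hset3]
      rw [← lintegral_const_mul' _ _ ENNReal.ofReal_ne_top]
      refine lintegral_congr fun ωr => ?_
      have h1 : Prod.mk ωr ⁻¹' {y : Ωr × ℝ | S ω < y.2 ∧ (y.1, y.2 - S ω) ∈ V}
          = {ℓ : ℝ | S ω < ℓ ∧ ℓ - S ω ∈ {t : ℝ | (ωr, t) ∈ V}} := rfl
      have h2 : Prod.mk ωr ⁻¹' ({y : Ωr × ℝ | 0 < y.2} ∩ V)
          = {t : ℝ | 0 < t} ∩ {t : ℝ | (ωr, t) ∈ V} := rfl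
      have hT : MeasurableSet {t : ℝ | (ωr, t) ∈ V} := measurable_prodMk_left hV
      rw [h1, h2, exp_shift p hp (S ω) (hS_nonneg ω) _ hT]
    calc (∫⁻ ω, ν (Prod.mk ω ⁻¹'
            {z : (∀ i, Ω i) × (Ωr × ℝ) | S z.1 < z.2.2 ∧ (z.2.1, z.2.2 - S z.1) ∈ V})
            ∂(Measure.pi P))
        = ∫⁻ ω, ENNReal.ofReal (Real.exp (-(p * S ω))) * ν ({y : Ωr × ℝ | 0 < y.2} ∩ V)
            ∂(Measure.pi P) := lintegral_congr slice
      _ = (∫⁻ ω, ENNReal.ofReal (Real.exp (-(p * S ω))) ∂(Measure.pi P))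
            * ν ({y : Ωr × ℝ | 0 < y.2} ∩ V) := lintegral_mul_const _ hf_meas
      _ = c * ν V := by rw [← hc_def, hnull]
  -- measurable sets
  have hA_meas : MeasurableSet {z : (∀ i, Ω i) × (Ωr × ℝ) |
      S z.1 < z.2.2 ∧ z.2.2 ≤ S z.1 + Xr z.2.1} := by
    have heq : {z : (∀ i, Ω i) × (Ωr × ℝ) | S z.1 < z.2.2 ∧ z.2.2 ≤ S z.1 + Xr z.2.1}
        = {z : (∀ i, Ω i) × (Ωr × ℝ) | S z.1 < z.2.2} ∩
          {z : (∀ i, Ω i) × (Ωr × ℝ) | z.2.2 ≤ S z.1 + Xr z.2.1} := rfl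
    rw [heq]
    exact (measurableSet_lt (hS_meas.comp measurable_fst) measurable_snd.snd).inter
      (measurableSet_le measurable_snd.snd
        ((hS_meas.comp measurable_fst).add (hXr.comp measurable_snd.fst)))
  have hA2_meas : MeasurableSet {y : Ωr × ℝ | y.2 ≤ Xr y.1} :=
    measurableSet_le measurable_snd (hXr.comp measurable_fst)
  have hV1 : MeasurableSet {y : Ωr × ℝ | y.2 ≤ Xr y.1 ∧ G y.1 y.2 ∈ B} := by
    have heq : {y : Ωr × ℝ | y.2 ≤ Xr y.1 ∧ G y.1 y.2 ∈ B}
        = {y : Ωr × ℝ | y.2 ≤ Xr y.1} ∩ ((fun y : Ωr × ℝ => G y.1 y.2) ⁻¹' B) := rfl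
    rw [heq]
    exact hA2_meas.inter (hG hB)
  -- rewrite both sides using cond_apply
  rw [cond_apply hA_meas, cond_apply hA2_meas]
  have hAeq : {z : (∀ i, Ω i) × (Ωr × ℝ) |
        (∑ i, X i (z.1 i)) < z.2.2 ∧ z.2.2 ≤ (∑ i, X i (z.1 i)) + Xr z.2.1}
      = {z : (∀ i, Ω i) × (Ωr × ℝ) | S z.1 < z.2.2 ∧
          (z.2.1, z.2.2 - S z.1) ∈ {y : Ωr × ℝ | y.2 ≤ Xr y.1}} := by
    ext z
    have hSz : S z.1 = ∑ i, X i (z.1 i) := rfl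
    constructor
    · rintro ⟨h1, h2⟩
      refine ⟨by rw [hSz]; exact h1, ?_⟩
      show z.2.2 - S z.1 ≤ Xr z.2.1
      rw [hSz]; linarith
    · rintro ⟨h1, h2⟩
      rw [hSz] at h1
      have h2' : z.2.2 - S z.1 ≤ Xr z.2.1 := h2
      rw [hSz] at h2'
      exact ⟨h1, by linarith⟩
  have hADeq : {z : (∀ i, Ω i) × (Ωr × ℝ) |
        (∑ i, X i (z.1 i)) < z.2.2 ∧ z.2.2 ≤ (∑ i, X i (z.1 i)) + Xr z.2.1}
      ∩ {z : (∀ i, Ω i) × (Ωr × ℝ) | G z.2.1 (z.2.2 - ∑ i, X i (z.1 i)) ∈ B}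
      = {z : (∀ i, Ω i) × (Ωr × ℝ) | S z.1 < z.2.2 ∧
          (z.2.1, z.2.2 - S z.1) ∈ {y : Ωr × ℝ | y.2 ≤ Xr y.1 ∧ G y.1 y.2 ∈ B}} := by
    ext z
    have hSz : S z.1 = ∑ i, X i (z.1 i) := rfl
    constructor
    · rintro ⟨⟨h1, h2⟩, h3⟩
      refine ⟨by rw [hSz]; exact h1, ?_, h3⟩
      show z.2.2 - S z.1 ≤ Xr z.2.1
      rw [hSz]; linarith
    · rintro ⟨h1, h2, h3⟩
      rw [hSz] at h1
      have h2' : z.2.2 - S z.1 ≤ Xr z.2.1 := h2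
      rw [hSz] at h2'
      exact ⟨⟨h1, by linarith⟩, h3⟩
  have hV2eq : {y : Ωr × ℝ | y.2 ≤ Xr y.1} ∩ {y : Ωr × ℝ | G y.1 y.2 ∈ B}
      = {y : Ωr × ℝ | y.2 ≤ Xr y.1 ∧ G y.1 y.2 ∈ B} := rfl
  rw [hADeq, hAeq, hV2eq, key _ hA2_meas, key _ hV1]
  rw [ENNReal.mul_inv (Or.inl hc_ne_zero) (Or.inl hc_ne_top), mul_mul_mul_comm,
    ENNReal.inv_mul_cancel hc_ne_zero hc_ne_top, one_mul]
end
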